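/- Let F, G, H : HCohI^n → HCohI be normal functors, let (f_{X⃗}) be a uniform family of cliques with f_{X⃗} ⊑ F(X⃗) ⊸ G(X⃗) for every n-tuple X⃗ of hypercoherences, and let (g_{X⃗}) be a uniform family of cliques with g_{X⃗} ⊑ G(X⃗) ⊸ H(X⃗). Then the family of relational compositions (g_{X⃗} ∘ f_{X⃗}), where g ∘ f = {(x,z) | ∃y, (x,y) ∈ f and (y,z) ∈ g}, is a uniform family of cliques with g_{X⃗} ∘ f_{X⃗} ⊑ F(X⃗) ⊸ H(X⃗). -/

import Mathlib

open CategoryTheory Limits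

/-- A hypercoherence: a web together with a set `Γ` of finite nonempty subsets
containing all singletons. -/
structure HCoh : Type 1 where
  web : Type
  Gam : Set web → Prop
  finite : ∀ {S}, Gam S → S.Finite
  nonempty : ∀ {S}, Gam S → S.Nonempty
  sing : ∀ x, Gam {x}

/-- A clique of a hypercoherence: a subset all of whose finite nonempty subsets are
coherent. -/
def HCoh.IsClique (X : HCoh) (c : Set X.web) : Prop :=
  ∀ S : Set X.web, S ⊆ c → S.Finite → S.Nonempty → X.Gam S

/-- The dual hypercoherence. -/
def HCoh.dual (X : HCoh) : HCoh where
  web := X.web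
  Gam S := (∃ x, S = {x}) ∨ (S.Finite ∧ S.Nonempty ∧ ¬ X.Gam S)
  finite := by
    rintro S (⟨x, rfl⟩ | h)
    exacts [Set.finite_singleton x, h.1]
  nonempty := by
    rintro S (⟨x, rfl⟩ | h)
    exacts [Set.singleton_nonempty x, h.2.1]
  sing x := Or.inl ⟨x, rfl⟩

/-- The tensor product of hypercoherences. -/
def HCoh.tens (X Y : HCoh) : HCoh where
  web := X.web × Y.web
  Gam S := S.Finite ∧ S.Nonempty ∧ X.Gam (Prod.fst '' S) ∧ Y.Gam (Prod.snd '' S)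
  finite h := h.1
  nonempty h := h.2.1
  sing p := ⟨Set.finite_singleton p, Set.singleton_nonempty p,
    by rw [Set.image_singleton]; exact X.sing p.1,
    by rw [Set.image_singleton]; exact Y.sing p.2⟩

/-- Linear implication of hypercoherences: `X ⊸ Y := (X ⊗ Y^⊥)^⊥`. -/
def HCoh.lolly (X Y : HCoh) : HCoh := (X.tens Y.dual).dual

/-- An embedding of hypercoherences: an injection preserving and reflecting the
coherence of finite nonempty subsets. -/
structure HEmb (X Y : HCoh) : Type where
  toFun : X.web → Y.web
  inj : Function.Injective toFun
  gam_iff : ∀ S : Set X.web, S.Finite → S.Nonempty → (X.Gam S ↔ Y.Gam (toFun '' S))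

/-- The category `HCohI` of hypercoherences and embeddings. -/
instance : Category HCoh where
  Hom := HEmb
  id X := ⟨id, fun _ _ h => h, by intro S _ _; rw [Set.image_id]⟩
  comp f g := ⟨g.toFun ∘ f.toFun, g.inj.comp f.inj, by
    intro S hfin hne
    rw [Set.image_comp]
    exact (f.gam_iff S hfin hne).trans (g.gam_iff _ (hfin.image _) (hne.image _))⟩
  id_comp _ := rfl
  comp_id _ := rfl
  assoc _ _ _ := rfl

/-- The induced embedding between duals. -/
def HEmb.dualMap {X Y : HCoh} (f : X ⟶ Y) : X.dual ⟶ Y.dual where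
  toFun := f.toFun
  inj := f.inj
  gam_iff S hfin hne := by
    constructor
    · rintro (⟨x, rfl⟩ | ⟨h1, h2, h3⟩)
      · exact Or.inl ⟨f.toFun x, Set.image_singleton⟩
      · exact Or.inr ⟨h1.image _, h2.image _, fun hg => h3 ((f.gam_iff S h1 h2).2 hg)⟩
    · rintro (⟨y, hy⟩ | ⟨_, _, h3⟩)
      · obtain ⟨x, hx⟩ := hne
        left
        refine ⟨x, Set.eq_singleton_iff_unique_mem.2 ⟨hx, fun x' hx' => f.inj ?_⟩⟩
        have m1 : f.toFun x' ∈ f.toFun '' S := Set.mem_image_of_mem _ hx'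
        have m2 : f.toFun x ∈ f.toFun '' S := Set.mem_image_of_mem _ hx
        erw [hy, Set.mem_singleton_iff] at m1 m2
        rw [m1, m2]
      · exact Or.inr ⟨hfin, hne, fun hg => h3 ((f.gam_iff S hfin hne).1 hg)⟩

/-- The induced embedding between tensor products. -/
def HEmb.tensMap {X X' Y Y' : HCoh} (f : X ⟶ X') (g : Y ⟶ Y') :
    X.tens Y ⟶ X'.tens Y' where
  toFun := Prod.map f.toFun g.toFun
  inj := f.inj.prodMap g.inj
  gam_iff S hfin hne := by
    have h1 : Prod.fst '' (Prod.map f.toFun g.toFun '' S) = f.toFun '' (Prod.fst '' S) := by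
      erw [Set.image_image, Set.image_image]
      rfl
    have h2 : Prod.snd '' (Prod.map f.toFun g.toFun '' S) = g.toFun '' (Prod.snd '' S) := by
      erw [Set.image_image, Set.image_image]
      rfl
    constructor
    · rintro ⟨_, _, hx, hy⟩
      exact ⟨hfin.image _, hne.image _,
        by erw [h1]; exact (f.gam_iff _ (hfin.image _) (hne.image _)).1 hx,
        by erw [h2]; exact (g.gam_iff _ (hfin.image _) (hne.image _)).1 hy⟩
    · rintro ⟨_, _, hx, hy⟩
      erw [h1] at hx
      erw [h2] at hy
      exact ⟨hfin, hne, (f.gam_iff _ (hfin.image _) (hne.image _)).2 hx,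
        (g.gam_iff _ (hfin.image _) (hne.image _)).2 hy⟩

/-- Linear negation as a covariant endofunctor of `HCohI`. -/
def hdualFunctor : HCoh ⥤ HCoh where
  obj := HCoh.dual
  map := HEmb.dualMap
  map_id _ := rfl
  map_comp _ _ := rfl

/-- Tensor as a functor on the product category. -/
def htensorFunctor : HCoh × HCoh ⥤ HCoh where
  obj p := p.1.tens p.2
  map f := HEmb.tensMap f.1 f.2
  map_id _ := rfl
  map_comp _ _ := rfl

/-- The category `HCohI^n`. -/
abbrev HCohTuple (n : ℕ) := Fin n → HCoh

/-- A normal functor: one preserving filtered colimits and finite pullbacks. -/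
def IsNormalFunctor {C : Type*} {D : Type*} [Category C] [Category D] (F : C ⥤ D) : Prop :=
  PreservesFilteredColimits F ∧ PreservesLimitsOfShape WalkingCospan F

/-- The pointwise dual of a functor. -/
def hdualF {n : ℕ} (F : HCohTuple n ⥤ HCoh) : HCohTuple n ⥤ HCoh := F ⋙ hdualFunctor

/-- The pointwise tensor of two functors. -/
def htensF {n : ℕ} (F G : HCohTuple n ⥤ HCoh) : HCohTuple n ⥤ HCoh :=
  F.prod' G ⋙ htensorFunctor

/-- The pointwise linear implication functor `F ⊸ G`. -/
def hlollyF {n : ℕ} (F G : HCohTuple n ⥤ HCoh) : HCohTuple n ⥤ HCoh :=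
  hdualF (htensF F (hdualF G))

/-- A uniform family of cliques of a normal functor `F : HCohI^n ⥤ HCohI`. -/
def IsUniformFamily {n : ℕ} (F : HCohTuple n ⥤ HCoh)
    (c : ∀ X : HCohTuple n, Set (F.obj X).web) : Prop :=
  (∀ X, (F.obj X).IsClique (c X)) ∧
    ∀ (X Y : HCohTuple n) (ι : X ⟶ Y), c X = (F.map ι).toFun ⁻¹' c Y

section Aux

open Classical

theorem HEmb.ext' {X Y : HCoh} {f g : X ⟶ Y} (h : HEmb.toFun f = HEmb.toFun g) : f = g := by
  change HEmb X Y at f g; cases f; cases g; cases h; rfl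

theorem lolly_clique_out {A B : HCoh} {c : Set (A.web × B.web)}
    (hc : (A.lolly B).IsClique c) {S : Set (A.web × B.web)}
    (hS : S ⊆ c) (hfin : S.Finite) (hne : S.Nonempty)
    (hA : A.Gam (Prod.fst '' S)) : B.Gam (Prod.snd '' S) := by
  have h := hc S hS hfin hne
  rcases h with ⟨p, rfl⟩ | ⟨-, -, hn⟩
  · erw [Set.image_singleton]; exact B.sing _
  · by_contra hB
    exact hn ⟨hfin, hne, hA, Or.inr ⟨hfin.image _, hne.image _, hB⟩⟩

theorem lolly_clique_inj {A B : HCoh} {c : Set (A.web × B.web)}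
    (hc : (A.lolly B).IsClique c) {S : Set (A.web × B.web)}
    (hS : S ⊆ c) (hfin : S.Finite) (hne : S.Nonempty)
    (hA : A.Gam (Prod.fst '' S)) {b : B.web} (hb : Prod.snd '' S = {b}) :
    ∃ p, S = {p} := by
  have h := hc S hS hfin hne
  rcases h with ⟨p, hp⟩ | ⟨-, -, hn⟩
  · exact ⟨p, hp⟩
  · exact absurd ⟨hfin, hne, hA, Or.inl ⟨b, hb⟩⟩ hn

theorem comp_isClique {A B C : HCoh} {f : Set (A.web × B.web)} {g : Set (B.web × C.web)}
    (hf : (A.lolly B).IsClique f) (hg : (B.lolly C).IsClique g) :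
    (A.lolly C).IsClique {p | ∃ y, (p.1, y) ∈ f ∧ (y, p.2) ∈ g} := by
  intro S hS hfin hne
  by_cases hsing : ∃ p : A.web × C.web, S = {p}
  · exact Or.inl hsing
  · refine Or.inr ⟨hfin, hne, ?_⟩
    rintro ⟨-, -, hA, hCd⟩
    have hBne : Nonempty B.web := by
      obtain ⟨p, hp⟩ := hne
      obtain ⟨y, -, -⟩ := hS hp
      exact ⟨y⟩
    have key : ∀ p : A.web × C.web, ∃ y : B.web,
        p ∈ S → ((p.1, y) ∈ f ∧ (y, p.2) ∈ g) := by
      intro p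
      by_cases hp : p ∈ S
      · obtain ⟨y, hy⟩ := hS hp
        exact ⟨y, fun _ => hy⟩
      · exact ⟨Classical.arbitrary _, fun h => absurd h hp⟩
    choose ψ hψ using key
    have hufst : Prod.fst '' ((fun p : A.web × C.web => (p.1, ψ p)) '' S) = Prod.fst '' S := by
      erw [Set.image_image]; rfl
    have husnd : Prod.snd '' ((fun p : A.web × C.web => (p.1, ψ p)) '' S) = ψ '' S := by
      erw [Set.image_image]
    have hvfst : Prod.fst '' ((fun p : A.web × C.web => (ψ p, p.2)) '' S) = ψ '' S := by
      erw [Set.image_image]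
    have hvsnd : Prod.snd '' ((fun p : A.web × C.web => (ψ p, p.2)) '' S) = Prod.snd '' S := by
      erw [Set.image_image]; rfl
    have huf : (fun p : A.web × C.web => (p.1, ψ p)) '' S ⊆ f := by
      rintro _ ⟨p, hp, rfl⟩; exact (hψ p hp).1
    have hvg : (fun p : A.web × C.web => (ψ p, p.2)) '' S ⊆ g := by
      rintro _ ⟨p, hp, rfl⟩; exact (hψ p hp).2
    have hBg : B.Gam (ψ '' S) := by
      have := lolly_clique_out hf huf (hfin.image _) (hne.image _)
        (by rw [hufst]; exact hA)
      rwa [husnd] at this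
    have hCg : C.Gam (Prod.snd '' S) := by
      have := lolly_clique_out hg hvg (hfin.image _) (hne.image _)
        (by rw [hvfst]; exact hBg)
      rwa [hvsnd] at this
    rcases hCd with ⟨c0, hc0⟩ | ⟨-, -, hnC⟩
    · obtain ⟨q, hq⟩ := lolly_clique_inj hg hvg (hfin.image _) (hne.image _)
        (by rw [hvfst]; exact hBg) (b := c0) (by rw [hvsnd]; exact hc0)
      have hψS : ψ '' S = {q.1} := by rw [← hvfst, hq, Set.image_singleton]
      obtain ⟨r, hr⟩ := lolly_clique_inj hf huf (hfin.image _) (hne.image _)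
        (by rw [hufst]; exact hA) (b := q.1) (by rw [husnd]; exact hψS)
      have hfstS : Prod.fst '' S = {r.1} := by rw [← hufst, hr, Set.image_singleton]
      apply hsing
      refine ⟨(r.1, c0), Set.eq_singleton_iff_unique_mem.2 ⟨?_, ?_⟩⟩
      · obtain ⟨p, hp⟩ := hne
        have h1 : p.1 = r.1 := by
          have := Set.mem_image_of_mem Prod.fst hp; rw [hfstS] at this; exact this
        have h2 : p.2 = c0 := by
          have := Set.mem_image_of_mem Prod.snd hp; rw [hc0] at this; exact this
        have he : (r.1, c0) = p := by rw [← h1, ← h2]; exact Prod.mk.eta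
        rw [he]; exact hp
      · intro p hp
        have h1 : p.1 = r.1 := by
          have := Set.mem_image_of_mem Prod.fst hp; rw [hfstS] at this; exact this
        have h2 : p.2 = c0 := by
          have := Set.mem_image_of_mem Prod.snd hp; rw [hc0] at this; exact this
        rw [← h1, ← h2]; exact Prod.mk.eta.symm
    · exact hnC hCg

end Aux

section Amalg

attribute [local instance] Classical.propDecidable

variable {X Y : HCoh} (ι : X ⟶ Y)

/-- First injection `Y → Y +_X Y` on webs. -/
noncomputable def aj₁ : Y.web →
    X.web ⊕ ({y : Y.web // y ∉ Set.range ι.toFun} ⊕ {y : Y.web // y ∉ Set.range ι.toFun}) :=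
  fun y => if h : y ∈ Set.range ι.toFun then Sum.inl h.choose else Sum.inr (Sum.inl ⟨y, h⟩)

/-- Second injection `Y → Y +_X Y` on webs. -/
noncomputable def aj₂ : Y.web →
    X.web ⊕ ({y : Y.web // y ∉ Set.range ι.toFun} ⊕ {y : Y.web // y ∉ Set.range ι.toFun}) :=
  fun y => if h : y ∈ Set.range ι.toFun then Sum.inl h.choose else Sum.inr (Sum.inr ⟨y, h⟩)

theorem aj₁_mem {y : Y.web} (h : y ∈ Set.range ι.toFun) {x : X.web} (hx : ι.toFun x = y) :
    aj₁ ι y = Sum.inl x := by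
  unfold aj₁
  rw [dif_pos h]
  exact congrArg Sum.inl (ι.inj (h.choose_spec.trans hx.symm))

theorem aj₂_mem {y : Y.web} (h : y ∈ Set.range ι.toFun) {x : X.web} (hx : ι.toFun x = y) :
    aj₂ ι y = Sum.inl x := by
  unfold aj₂
  rw [dif_pos h]
  exact congrArg Sum.inl (ι.inj (h.choose_spec.trans hx.symm))

theorem aj₁_ι (x : X.web) : aj₁ ι (ι.toFun x) = Sum.inl x := aj₁_mem ι ⟨x, rfl⟩ rfl

theorem aj₂_ι (x : X.web) : aj₂ ι (ι.toFun x) = Sum.inl x := aj₂_mem ι ⟨x, rfl⟩ rfl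

theorem aj₁_not_mem {y : Y.web} (h : y ∉ Set.range ι.toFun) :
    aj₁ ι y = Sum.inr (Sum.inl ⟨y, h⟩) := by unfold aj₁; exact dif_neg h

theorem aj₂_not_mem {y : Y.web} (h : y ∉ Set.range ι.toFun) :
    aj₂ ι y = Sum.inr (Sum.inr ⟨y, h⟩) := by unfold aj₂; exact dif_neg h

theorem aj₁_inj : Function.Injective (aj₁ ι) := by
  intro y y' h
  by_cases h1 : y ∈ Set.range ι.toFun <;> by_cases h2 : y' ∈ Set.range ι.toFun
  · rw [aj₁_mem ι h1 h1.choose_spec, aj₁_mem ι h2 h2.choose_spec] at h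
    rw [← h1.choose_spec, ← h2.choose_spec, Sum.inl.inj h]
  · rw [aj₁_mem ι h1 h1.choose_spec, aj₁_not_mem ι h2] at h
    exact absurd h (by simp)
  · rw [aj₁_not_mem ι h1, aj₁_mem ι h2 h2.choose_spec] at h
    exact absurd h (by simp)
  · rw [aj₁_not_mem ι h1, aj₁_not_mem ι h2] at h
    simpa using h

theorem aj₂_inj : Function.Injective (aj₂ ι) := by
  intro y y' h
  by_cases h1 : y ∈ Set.range ι.toFun <;> by_cases h2 : y' ∈ Set.range ι.toFun
  · rw [aj₂_mem ι h1 h1.choose_spec, aj₂_mem ι h2 h2.choose_spec] at h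
    rw [← h1.choose_spec, ← h2.choose_spec, Sum.inl.inj h]
  · rw [aj₂_mem ι h1 h1.choose_spec, aj₂_not_mem ι h2] at h
    exact absurd h (by simp)
  · rw [aj₂_not_mem ι h1, aj₂_mem ι h2 h2.choose_spec] at h
    exact absurd h (by simp)
  · rw [aj₂_not_mem ι h1, aj₂_not_mem ι h2] at h
    simpa using h

theorem aj_eq {y z : Y.web} (h : aj₁ ι y = aj₂ ι z) :
    y = z ∧ y ∈ Set.range ι.toFun := by
  by_cases h1 : y ∈ Set.range ι.toFun <;> by_cases h2 : z ∈ Set.range ι.toFun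
  · rw [aj₁_mem ι h1 h1.choose_spec, aj₂_mem ι h2 h2.choose_spec] at h
    exact ⟨by rw [← h1.choose_spec, ← h2.choose_spec, Sum.inl.inj h], h1⟩
  · rw [aj₁_mem ι h1 h1.choose_spec, aj₂_not_mem ι h2] at h
    exact absurd h (by simp)
  · rw [aj₁_not_mem ι h1, aj₂_mem ι h2 h2.choose_spec] at h
    exact absurd h (by simp)
  · rw [aj₁_not_mem ι h1, aj₂_not_mem ι h2] at h
    exact absurd h (by simp)

/-- The amalgamated sum `Y +_X Y` of two copies of `Y` along `ι : X ↪ Y`. -/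
noncomputable def amalg : HCoh where
  web := X.web ⊕ ({y : Y.web // y ∉ Set.range ι.toFun} ⊕ {y : Y.web // y ∉ Set.range ι.toFun})
  Gam S := S.Finite ∧ S.Nonempty ∧
    ((∃ T, S = aj₁ ι '' T ∧ Y.Gam T) ∨ (∃ T, S = aj₂ ι '' T ∧ Y.Gam T))
  finite h := h.1
  nonempty h := h.2.1
  sing w := by
    refine ⟨Set.finite_singleton _, Set.singleton_nonempty _, ?_⟩
    rcases w with x | (⟨y, hy⟩ | ⟨y, hy⟩)
    · exact Or.inl ⟨{ι.toFun x}, by rw [Set.image_singleton, aj₁_ι], Y.sing _⟩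
    · exact Or.inl ⟨{y}, by rw [Set.image_singleton, aj₁_not_mem ι hy], Y.sing _⟩
    · exact Or.inr ⟨{y}, by rw [Set.image_singleton, aj₂_not_mem ι hy], Y.sing _⟩

/-- The first embedding into the amalgamated sum. -/
noncomputable def amalgJ₁ : Y ⟶ amalg ι where
  toFun := aj₁ ι
  inj := aj₁_inj ι
  gam_iff S hfin hne := by
    constructor
    · exact fun h => ⟨hfin.image _, hne.image _, Or.inl ⟨S, rfl, h⟩⟩
    · rintro ⟨-, -, ⟨T, hST, hT⟩ | ⟨T, hST, hT⟩⟩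
      · obtain rfl : S = T := Set.image_injective.mpr (aj₁_inj ι) hST
        exact hT
      · have hsub : S = T := by
          apply Set.Subset.antisymm
          · intro y hy
            have hm : aj₁ ι y ∈ aj₂ ι '' T := hST ▸ Set.mem_image_of_mem _ hy
            obtain ⟨z, hz, hzy⟩ := hm
            obtain ⟨he, -⟩ := aj_eq ι hzy.symm
            rwa [he]
          · intro z hz
            have hm : aj₂ ι z ∈ aj₁ ι '' S := by erw [hST]; exact Set.mem_image_of_mem _ hz
            obtain ⟨y, hy, hyz⟩ := hm
            obtain ⟨he, -⟩ := aj_eq ι hyz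
            rwa [← he]
        rwa [hsub]

/-- The second embedding into the amalgamated sum. -/
noncomputable def amalgJ₂ : Y ⟶ amalg ι where
  toFun := aj₂ ι
  inj := aj₂_inj ι
  gam_iff S hfin hne := by
    constructor
    · exact fun h => ⟨hfin.image _, hne.image _, Or.inr ⟨S, rfl, h⟩⟩
    · rintro ⟨-, -, ⟨T, hST, hT⟩ | ⟨T, hST, hT⟩⟩
      · have hsub : S = T := by
          apply Set.Subset.antisymm
          · intro y hy
            have hm : aj₂ ι y ∈ aj₁ ι '' T := hST ▸ Set.mem_image_of_mem _ hy
            obtain ⟨z, hz, hzy⟩ := hm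
            obtain ⟨he, -⟩ := aj_eq ι hzy
            rwa [← he]
          · intro z hz
            have hm : aj₁ ι z ∈ aj₂ ι '' S := by erw [hST]; exact Set.mem_image_of_mem _ hz
            obtain ⟨y, hy, hyz⟩ := hm
            obtain ⟨he, -⟩ := aj_eq ι hyz.symm
            rwa [he]
        rwa [hsub]
      · obtain rfl : S = T := Set.image_injective.mpr (aj₂_inj ι) hST
        exact hT

theorem amalg_comm : ι ≫ amalgJ₁ ι = ι ≫ amalgJ₂ ι :=
  HEmb.ext' (funext fun x => (aj₁_ι ι x).trans (aj₂_ι ι x).symm)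

/-- Factoring an embedding through another with larger range. -/
noncomputable def factorThrough {W : HCoh} (e : W ⟶ Y)
    (h : ∀ w, e.toFun w ∈ Set.range ι.toFun) : W ⟶ X where
  toFun w := (h w).choose
  inj w w' hww := e.inj (by
    calc e.toFun w = ι.toFun ((h w).choose) := (h w).choose_spec.symm
      _ = ι.toFun ((h w').choose) := congrArg ι.toFun hww
      _ = e.toFun w' := (h w').choose_spec)
  gam_iff S hfin hne := by
    have himg : ι.toFun '' ((fun w => (h w).choose) '' S) = e.toFun '' S := by
      rw [Set.image_image]
      exact Set.image_congr fun w _ => (h w).choose_spec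
    rw [e.gam_iff S hfin hne, ← himg]
    exact (ι.gam_iff _ (hfin.image _) (hne.image _)).symm

theorem factorThrough_comp {W : HCoh} (e : W ⟶ Y)
    (h : ∀ w, e.toFun w ∈ Set.range ι.toFun) : factorThrough ι e h ≫ ι = e :=
  HEmb.ext' (funext fun w => (h w).choose_spec)

end Amalg

section TupleAmalg

open CategoryTheory.Limits

variable {n : ℕ} {X Y : HCohTuple n} (ι : X ⟶ Y)

/-- Pointwise amalgamated sum of tuples. -/
noncomputable def tAmalg : HCohTuple n := fun i => amalg (ι i)

/-- First pointwise embedding. -/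
noncomputable def tJ₁ : Y ⟶ tAmalg ι := fun i => amalgJ₁ (ι i)

/-- Second pointwise embedding. -/
noncomputable def tJ₂ : Y ⟶ tAmalg ι := fun i => amalgJ₂ (ι i)

theorem tComm : ι ≫ tJ₁ ι = ι ≫ tJ₂ ι := funext fun i => amalg_comm (ι i)

/-- `X` is the pullback of the two embeddings of `Y` into `Y +_X Y`. -/
noncomputable def tIsLimit : IsLimit (PullbackCone.mk ι ι (tComm ι)) := by
  have hrange : ∀ (s : PullbackCone (tJ₁ ι) (tJ₂ ι)) (i : Fin n) (w : (s.pt i).web),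
      (s.fst i).toFun w ∈ Set.range (ι i).toFun ∧
        (s.fst i).toFun w = (s.snd i).toFun w := by
    intro s i w
    have hc := congrFun (congrArg HEmb.toFun (congrFun s.condition i)) w
    have hc' : aj₁ (ι i) ((s.fst i).toFun w) = aj₂ (ι i) ((s.snd i).toFun w) := hc
    obtain ⟨he, hr⟩ := aj_eq (ι i) hc'
    exact ⟨hr, he⟩
  refine PullbackCone.IsLimit.mk (tComm ι)
    (fun s => fun i => factorThrough (ι i) (s.fst i) (fun w => (hrange s i w).1))
    (fun s => funext fun i => factorThrough_comp (ι i) (s.fst i) _)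
    (fun s => ?_) (fun s m h₁ h₂ => ?_)
  · have hfs : s.fst = s.snd :=
      funext fun i => HEmb.ext' (funext fun w => (hrange s i w).2)
    refine Eq.trans ?_ hfs
    exact funext fun i => factorThrough_comp (ι i) (s.fst i) _
  · funext i
    apply HEmb.ext'
    funext w
    apply (ι i).inj
    have hm := congrFun (congrArg HEmb.toFun (congrFun h₁ i)) w
    exact hm.trans (congrFun (congrArg HEmb.toFun
      (factorThrough_comp (ι i) (s.fst i) (fun w => (hrange s i w).1))) w).symm

/-- The one-point hypercoherence. -/
def ptH : HCoh where
  web := PUnit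
  Gam S := S = {PUnit.unit}
  finite h := by rw [h]; exact Set.finite_singleton _
  nonempty h := by rw [h]; exact Set.singleton_nonempty _
  sing x := by cases x; rfl

/-- The embedding of the point onto any element. -/
def ptEmb {Z : HCoh} (z : Z.web) : ptH ⟶ Z where
  toFun _ := z
  inj a b _ := Subsingleton.elim (α := PUnit) a b
  gam_iff S hfin hne := by
    have h1 : S = {PUnit.unit} := Set.eq_singleton_iff_unique_mem.2
      ⟨by obtain ⟨v, hv⟩ := hne; cases v; exact hv, fun u _ => by cases u; rfl⟩
    constructor
    · intro _
      erw [h1, Set.image_singleton]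
      exact Z.sing z
    · intro _; exact h1

theorem exists_preimage {n : ℕ} (G : HCohTuple n ⥤ HCoh)
    (hG : PreservesLimitsOfShape WalkingCospan G) {X Y : HCohTuple n} (ι : X ⟶ Y)
    (y' : (G.obj Y).web)
    (h : (G.map (tJ₁ ι)).toFun y' = (G.map (tJ₂ ι)).toFun y') :
    ∃ y, (G.map ι).toFun y = y' := by
  haveI := hG
  have l := isLimitPullbackConeMapOfIsLimit G (tComm ι) (tIsLimit ι)
  have he : ptEmb y' ≫ G.map (tJ₁ ι) = ptEmb y' ≫ G.map (tJ₂ ι) :=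
    HEmb.ext' (funext fun _ => h)
  refine ⟨(PullbackCone.IsLimit.lift l (ptEmb y') (ptEmb y') he).toFun PUnit.unit, ?_⟩
  have hfac := PullbackCone.IsLimit.lift_fst l (ptEmb y') (ptEmb y') he
  exact congrFun (congrArg HEmb.toFun hfac) PUnit.unit

end TupleAmalg

/-- uniform families of cliques of hypercoherence normal functors are
closed under relational composition. -/
theorem uniform_families_compose_hypercoherences {n : ℕ}
    (F G H : HCohTuple n ⥤ HCoh)
    (hF : IsNormalFunctor F) (hG : IsNormalFunctor G) (hH : IsNormalFunctor H)
    (f : ∀ X : HCohTuple n, Set ((F.obj X).web × (G.obj X).web))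
    (g : ∀ X : HCohTuple n, Set ((G.obj X).web × (H.obj X).web))
    (hf : IsUniformFamily (hlollyF F G) f) (hg : IsUniformFamily (hlollyF G H) g) :
    IsUniformFamily (hlollyF F H)
      (fun X => { p | ∃ y, (p.1, y) ∈ f X ∧ (y, p.2) ∈ g X }) := by
  constructor
  · intro X
    exact comp_isClique (hf.1 X) (hg.1 X)
  · intro X Y ι
    ext p
    obtain ⟨x, z⟩ := p
    simp only [Set.mem_setOf_eq, Set.mem_preimage]
    constructor
    · rintro ⟨y, h1, h2⟩
      refine ⟨(G.map ι).toFun y, ?_, ?_⟩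
      · have hu := hf.2 X Y ι
        rw [hu] at h1
        exact h1
      · have hu := hg.2 X Y ι
        rw [hu] at h2
        exact h2
    · rintro ⟨y', h1, h2⟩
      have h1' : ((F.map ι).toFun x, y') ∈ f Y := h1
      have h2' : (y', (H.map ι).toFun z) ∈ g Y := h2
      -- push into the amalgamated sum
      have k1 : ((F.map (tJ₁ ι)).toFun ((F.map ι).toFun x), (G.map (tJ₁ ι)).toFun y')
          ∈ f (tAmalg ι) := by
        have hu := hf.2 Y (tAmalg ι) (tJ₁ ι)
        rw [hu] at h1'
        exact h1'
      have k2 : ((F.map (tJ₂ ι)).toFun ((F.map ι).toFun x), (G.map (tJ₂ ι)).toFun y')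
          ∈ f (tAmalg ι) := by
        have h1'' : ((F.map ι).toFun x, y') ∈ f Y := h1
        have hu := hf.2 Y (tAmalg ι) (tJ₂ ι)
        rw [hu] at h1''
        exact h1''
      have l1 : ((G.map (tJ₁ ι)).toFun y', (H.map (tJ₁ ι)).toFun ((H.map ι).toFun z))
          ∈ g (tAmalg ι) := by
        have hu := hg.2 Y (tAmalg ι) (tJ₁ ι)
        rw [hu] at h2'
        exact h2'
      have l2 : ((G.map (tJ₂ ι)).toFun y', (H.map (tJ₂ ι)).toFun ((H.map ι).toFun z))
          ∈ g (tAmalg ι) := by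
        have h2'' : (y', (H.map ι).toFun z) ∈ g Y := h2
        have hu := hg.2 Y (tAmalg ι) (tJ₂ ι)
        rw [hu] at h2''
        exact h2''
      -- the two copies agree on images of X
      have hFeq : (F.map (tJ₂ ι)).toFun ((F.map ι).toFun x)
          = (F.map (tJ₁ ι)).toFun ((F.map ι).toFun x) := by
        have hc : F.map ι ≫ F.map (tJ₁ ι) = F.map ι ≫ F.map (tJ₂ ι) := by
          rw [← F.map_comp, ← F.map_comp, tComm]
        exact (congrFun (congrArg HEmb.toFun hc) x).symm
      have hHeq : (H.map (tJ₂ ι)).toFun ((H.map ι).toFun z)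
          = (H.map (tJ₁ ι)).toFun ((H.map ι).toFun z) := by
        have hc : H.map ι ≫ H.map (tJ₁ ι) = H.map ι ≫ H.map (tJ₂ ι) := by
          rw [← H.map_comp, ← H.map_comp, tComm]
        exact (congrFun (congrArg HEmb.toFun hc) z).symm
      rw [hFeq] at k2
      rw [hHeq] at l2
      -- cliques force the two images of y' to coincide
      set a := (F.map (tJ₁ ι)).toFun ((F.map ι).toFun x) with ha
      set b₁ := (G.map (tJ₁ ι)).toFun y' with hb₁
      set b₂ := (G.map (tJ₂ ι)).toFun y' with hb₂
      set c := (H.map (tJ₁ ι)).toFun ((H.map ι).toFun z) with hc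
      have hcf : ((F.obj (tAmalg ι)).lolly (G.obj (tAmalg ι))).IsClique (f (tAmalg ι)) :=
        hf.1 (tAmalg ι)
      have hcg : ((G.obj (tAmalg ι)).lolly (H.obj (tAmalg ι))).IsClique (g (tAmalg ι)) :=
        hg.1 (tAmalg ι)
      have hSsub : ({(a, b₁), (a, b₂)} :
          Set ((F.obj (tAmalg ι)).web × (G.obj (tAmalg ι)).web)) ⊆ f (tAmalg ι) := by
        rintro q (rfl | rfl)
        · exact k1
        · exact k2
      have hSfst : Prod.fst '' ({(a, b₁), (a, b₂)} :
          Set ((F.obj (tAmalg ι)).web × (G.obj (tAmalg ι)).web)) = {a} := by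
        rw [Set.image_pair]
        exact Set.pair_eq_singleton a
      have hSsnd : Prod.snd '' ({(a, b₁), (a, b₂)} :
          Set ((F.obj (tAmalg ι)).web × (G.obj (tAmalg ι)).web)) = {b₁, b₂} :=
        Set.image_pair _ _ _
      have hBg : (G.obj (tAmalg ι)).Gam {b₁, b₂} := by
        have := lolly_clique_out hcf hSsub
          ((Set.finite_singleton _).insert _) (Set.insert_nonempty _ _)
          (by rw [hSfst]; exact (F.obj (tAmalg ι)).sing a)
        rwa [hSsnd] at this
      have hTsub : ({(b₁, c), (b₂, c)} :
          Set ((G.obj (tAmalg ι)).web × (H.obj (tAmalg ι)).web)) ⊆ g (tAmalg ι) := by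
        rintro q (rfl | rfl)
        · exact l1
        · exact l2
      have hTfst : Prod.fst '' ({(b₁, c), (b₂, c)} :
          Set ((G.obj (tAmalg ι)).web × (H.obj (tAmalg ι)).web)) = {b₁, b₂} :=
        Set.image_pair _ _ _
      have hTsnd : Prod.snd '' ({(b₁, c), (b₂, c)} :
          Set ((G.obj (tAmalg ι)).web × (H.obj (tAmalg ι)).web)) = {c} := by
        rw [Set.image_pair]
        exact Set.pair_eq_singleton c
      obtain ⟨q, hq⟩ := lolly_clique_inj hcg hTsub
        ((Set.finite_singleton _).insert _) (Set.insert_nonempty _ _)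
        (by rw [hTfst]; exact hBg) (b := c) hTsnd
      have e1 : (b₁, c) = q := by
        rw [← Set.mem_singleton_iff, ← hq]; exact Set.mem_insert _ _
      have e2 : (b₂, c) = q := by
        rw [← Set.mem_singleton_iff, ← hq]; exact Set.mem_insert_of_mem _ rfl
      have hbeq : (G.map (tJ₁ ι)).toFun y' = (G.map (tJ₂ ι)).toFun y' :=
        congrArg Prod.fst (e1.trans e2.symm)
      obtain ⟨y, hy⟩ := exists_preimage G hG.2 ι y' hbeq
      refine ⟨y, ?_, ?_⟩
      · have hu := hf.2 X Y ι
        rw [hu]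
        show ((F.map ι).toFun x, (G.map ι).toFun y) ∈ f Y
        rw [hy]
        exact h1
      · have hu := hg.2 X Y ι
        rw [hu]
        show ((G.map ι).toFun y, (H.map ι).toFun z) ∈ g Y
        rw [hy]
        exact h2
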